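/- Let p ≥ 1 and let D be the closed unit disc in ℂ, with the 2p boundary points z_k = exp(2πi k / (2p)) for k = 0, …, 2p−1. Suppose γ_1, …, γ_p : [0,1] → D are injective paths whose images are pairwise disjoint, each of which meets the boundary circle ∂D exactly at its two endpoints, such that every endpoint is one of the points z_k and each z_k is an endpoint of exactly one path. Then every path γ_m joins a point z_a to a point z_b where a and b have opposite parity (one even index and one odd index). -/

import Mathlib

open Complex Real

/-- The `2p` equally spaced boundary points `z_k = exp(2πik/(2p))` of the unit disc. -/
noncomputable def bdryPt (p : ℕ) (k : Fin (2 * p)) : ℂ :=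
  Complex.exp (2 * Real.pi * Complex.I * k / (2 * p))

namespace DiscArcsAux

open Set

lemma near_one_slit {z : ℂ} (h : ‖z - 1‖ < 1) : z ∈ Complex.slitPlane := by
  rw [Complex.mem_slitPlane_iff]
  left
  have h1 : ‖z - 1‖ ^ 2 < 1 := by nlinarith [norm_nonneg (z - 1)]
  have h2 : ‖z - 1‖ ^ 2 = (z.re - 1) ^ 2 + z.im ^ 2 := by
    rw [Complex.sq_norm, Complex.normSq_apply]
    simp [Complex.sub_re, Complex.sub_im]
    ring
  nlinarith [sq_nonneg z.im]

lemma div_near_one {u v : ℂ} {m : ℝ} (hm : 0 < m) (hmv : m ≤ ‖v‖) (h : ‖u - v‖ < m) :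
    ‖u / v - 1‖ < 1 := by
  have hv : v ≠ 0 := by
    intro h0; rw [h0] at hmv; simp at hmv; linarith
  have he : u / v - 1 = (u - v) / v := by field_simp
  rw [he, norm_div, div_lt_one (by linarith)]
  linarith

lemma im_of_exp_eq {z : ℂ} {r θ : ℝ} (hr : 0 < r)
    (h : Complex.exp z = (r : ℂ) * Complex.exp ((θ : ℂ) * I)) : ∃ k : ℤ, z.im = θ + 2 * π * k := by
  have h2 : Complex.exp z = Complex.exp ((Real.log r : ℂ) + (θ : ℂ) * I) := by
    rw [Complex.exp_add, ← Complex.ofReal_exp, Real.exp_log hr, h]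
  obtain ⟨n, hn⟩ := Complex.exp_eq_exp_iff_exists_int.mp h2
  refine ⟨n, ?_⟩
  have := congrArg Complex.im hn
  simp at this
  rw [this]; ring

lemma neg_exp_mul_I (θ : ℝ) :
    -Complex.exp ((θ : ℂ) * I) = Complex.exp (((θ + π : ℝ) : ℂ) * I) := by
  push_cast
  rw [add_mul, Complex.exp_add, Complex.exp_pi_mul_I]
  ring

lemma exp_sub_exp {a b : ℝ} (h1 : a < b) (h2 : b < a + 2 * π) :
    Complex.exp ((a : ℂ) * I) - Complex.exp ((b : ℂ) * I)
      = ((2 * Real.sin ((b - a) / 2) : ℝ) : ℂ) * Complex.exp ((((a + b) / 2 - π / 2 : ℝ) : ℂ) * I)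
      ∧ 0 < 2 * Real.sin ((b - a) / 2) := by
  constructor
  · apply Complex.ext
    · simp only [Complex.sub_re, Complex.mul_re, Complex.ofReal_re, Complex.ofReal_im,
        Complex.exp_ofReal_mul_I_re, Complex.exp_ofReal_mul_I_im, zero_mul, sub_zero]
      rw [Real.cos_sub_cos]
      rw [show (a + b) / 2 - π / 2 = -(π / 2 - (a + b) / 2) by ring, Real.cos_neg,
        Real.cos_pi_div_two_sub]
      rw [show (a - b) / 2 = -((b - a) / 2) by ring, Real.sin_neg]
      ring
    · simp only [Complex.sub_im, Complex.mul_im, Complex.ofReal_re, Complex.ofReal_im,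
        Complex.exp_ofReal_mul_I_re, Complex.exp_ofReal_mul_I_im, zero_mul, add_zero]
      rw [Real.sin_sub_sin]
      rw [show (a + b) / 2 - π / 2 = -(π / 2 - (a + b) / 2) by ring, Real.sin_neg,
        Real.sin_pi_div_two_sub]
      rw [show (a - b) / 2 = -((b - a) / 2) by ring, Real.sin_neg]
      ring
  · have : 0 < Real.sin ((b - a) / 2) :=
      Real.sin_pos_of_pos_of_lt_pi (by linarith) (by linarith)
    linarith

lemma re_mul_conj_exp (z : ℂ) (b : ℝ) :
    (Complex.exp z * (starRingEnd ℂ) (Complex.exp ((b : ℂ) * I))).re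
      = Real.exp z.re * Real.cos (z.im - b) := by
  have h1 : (starRingEnd ℂ) (Complex.exp ((b : ℂ) * I)) = Complex.exp (-((b : ℂ) * I)) := by
    rw [← Complex.exp_conj]; congr 1; simp
  rw [h1, ← Complex.exp_add, Complex.exp_re]
  have e1 : (z + -((b:ℂ) * I)).re = z.re := by simp
  have e2 : (z + -((b:ℂ) * I)).im = z.im - b := by simp; ring
  rw [e1, e2]

lemma cos_pos_interval {θ : ℝ} (h : 0 < Real.cos θ) :
    ∃ n : ℤ, 2 * π * n - π / 2 < θ ∧ θ < 2 * π * n + π / 2 := by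
  have hπ := Real.pi_pos
  set n := round (θ / (2 * π)) with hn
  have hb : |θ / (2 * π) - n| ≤ 1 / 2 := abs_sub_round _
  have hx : |θ - n * (2 * π)| ≤ π := by
    have he : θ - n * (2 * π) = (θ / (2 * π) - n) * (2 * π) := by field_simp
    rw [he, abs_mul, abs_of_pos (show (0:ℝ) < 2 * π by linarith)]
    nlinarith [hb, abs_nonneg (θ / (2 * π) - (n : ℝ))]
  have hcx : Real.cos (θ - n * (2 * π)) = Real.cos θ := Real.cos_sub_int_mul_two_pi θ n
  obtain ⟨hx1, hx2⟩ := abs_le.mp hx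
  have h1 : θ - n * (2 * π) < π / 2 := by
    by_contra hge
    push_neg at hge
    have := Real.cos_nonpos_of_pi_div_two_le_of_le hge (by linarith)
    rw [hcx] at this; linarith
  have h2 : -(π / 2) < θ - n * (2 * π) := by
    by_contra hge
    push_neg at hge
    have hc : Real.cos (-(θ - n * (2 * π))) ≤ 0 :=
      Real.cos_nonpos_of_pi_div_two_le_of_le (by linarith) (by linarith)
    rw [Real.cos_neg, hcx] at hc; linarith
  exact ⟨n, by linarith, by linarith⟩

lemma edge_abs_lt (u : ℝ → ℝ) (hu : Continuous u)
    (h : ∀ x ∈ Icc (0 : ℝ) 1, 0 < Real.cos (u x)) : |u 1 - u 0| < π := by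
  have hπ := Real.pi_pos
  obtain ⟨n, hn1, hn2⟩ := cos_pos_interval (h 0 ⟨le_rfl, zero_le_one⟩)
  have hcos_lo : Real.cos (2 * π * n - π / 2) = 0 := by
    rw [show 2 * π * (n : ℝ) - π / 2 = -(π / 2 - (n : ℤ) * (2 * π)) by push_cast; ring,
      Real.cos_neg, Real.cos_sub_int_mul_two_pi, Real.cos_pi_div_two]
  have hcos_hi : Real.cos (2 * π * n + π / 2) = 0 := by
    rw [show 2 * π * (n : ℝ) + π / 2 = π / 2 + (n : ℤ) * (2 * π) by push_cast; ring,
      Real.cos_add_int_mul_two_pi, Real.cos_pi_div_two]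
  have key : ∀ x ∈ Icc (0 : ℝ) 1, 2 * π * n - π / 2 < u x ∧ u x < 2 * π * n + π / 2 := by
    intro x hx
    constructor
    · by_contra hle
      push_neg at hle
      obtain ⟨y, hy, hyv⟩ := intermediate_value_Icc' hx.1 hu.continuousOn
        (show 2 * π * (n : ℝ) - π / 2 ∈ Icc (u x) (u 0) from ⟨hle, le_of_lt hn1⟩)
      have hcy := h y ⟨hy.1, le_trans hy.2 hx.2⟩
      rw [hyv, hcos_lo] at hcy; linarith
    · by_contra hle
      push_neg at hle
      obtain ⟨y, hy, hyv⟩ := intermediate_value_Icc hx.1 hu.continuousOn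
        (show 2 * π * (n : ℝ) + π / 2 ∈ Icc (u 0) (u x) from ⟨le_of_lt hn2, hle⟩)
      have hcy := h y ⟨hy.1, le_trans hy.2 hx.2⟩
      rw [hyv, hcos_hi] at hcy; linarith
  obtain ⟨ha1, ha2⟩ := key 1 ⟨zero_le_one, le_rfl⟩
  obtain ⟨hb1, hb2⟩ := key 0 ⟨le_rfl, zero_le_one⟩
  rw [abs_lt]
  constructor <;> linarith

lemma re_neg_of_in_disc {w z : ℂ} (hwz : ‖w + z‖ ≤ 1) (hz : ‖z‖ = 1) (hw : w ≠ 0) :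
    (w * (starRingEnd ℂ) z).re < 0 := by
  have h1 : Complex.normSq (w + z) ≤ 1 := by
    rw [← Complex.sq_norm]
    nlinarith [norm_nonneg (w + z)]
  have h2 : Complex.normSq z = 1 := by
    rw [← Complex.sq_norm, hz]; norm_num
  have h3 : 0 < Complex.normSq w := Complex.normSq_pos.mpr hw
  have h4 := Complex.normSq_add w z
  linarith

lemma orient (h : unitInterval → ℂ) (hc : Continuous h) (u v : ℂ)
    (he : h 0 = u ∧ h 1 = v ∨ h 0 = v ∧ h 1 = u) :
    ∃ h' : unitInterval → ℂ, Continuous h' ∧ h' 0 = u ∧ h' 1 = v ∧ ∀ t, ∃ s, h' t = h s := by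
  rcases he with ⟨h0, h1⟩ | ⟨h0, h1⟩
  · exact ⟨h, hc, h0, h1, fun t => ⟨t, rfl⟩⟩
  · refine ⟨h ∘ unitInterval.symm, hc.comp unitInterval.continuous_symm, ?_, ?_, fun t => ⟨_, rfl⟩⟩
    · simp only [Function.comp_apply, unitInterval.symm_zero]; exact h1
    · simp only [Function.comp_apply, unitInterval.symm_one]; exact h0

lemma lift_line (w : ℝ → ℂ) (hw : Continuous w) (m δ : ℝ) (hm : 0 < m)
    (hmw : ∀ x, m ≤ ‖w x‖) (hδ : 0 < δ)
    (hu : ∀ x y, |x - y| ≤ δ → ‖w x - w y‖ < m)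
    (hc0 : ∀ x, x ≤ 0 → w x = w 0) (hc1 : ∀ x, 1 ≤ x → w x = w 1) :
    ∃ L : ℝ → ℂ, Continuous L ∧ ∀ x, Complex.exp (L x) = w x := by
  have hne : ∀ x, w x ≠ 0 := by
    intro x h0
    have := hmw x; rw [h0] at this; simp at this; linarith
  have main : ∀ n : ℕ, ∃ L : ℝ → ℂ, Continuous L ∧
      ∀ x, x ≤ (n : ℝ) * δ → Complex.exp (L x) = w x := by
    intro n
    induction n with
    | zero =>
      refine ⟨fun _ => Complex.log (w 0), continuous_const, fun x hx => ?_⟩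
      rw [Complex.exp_log (hne 0)]
      exact (hc0 x (by simpa using hx)).symm
    | succ n ih =>
      obtain ⟨L, hL, hLe⟩ := ih
      set c : ℝ := (n : ℝ) * δ with hc
      set cl : ℝ → ℝ := fun x => max c (min (c + δ) x) with hcl
      have hclc : Continuous cl := continuous_const.max (continuous_const.min continuous_id)
      have hclmem : ∀ x, c ≤ cl x ∧ cl x ≤ c + δ := by
        intro x
        exact ⟨le_max_left _ _, max_le (by linarith) (min_le_left _ _)⟩
      have hcldist : ∀ x, |cl x - c| ≤ δ := by
        intro x
        rw [abs_le]
        constructor <;> [linarith [(hclmem x).1]; linarith [(hclmem x).2]]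
      have hcleq : ∀ x, c ≤ x → x ≤ c + δ → cl x = x := by
        intro x h1 h2
        rw [hcl]; simp only []
        rw [min_eq_right h2, max_eq_right h1]
      set M : ℝ → ℂ := fun x => L c + Complex.log (w (cl x) / w c) with hM
      have hMc : Continuous M := by
        refine continuous_const.add (continuous_iff_continuousAt.mpr fun x => ?_)
        refine ContinuousAt.clog ?_ ?_
        · exact ((hw.comp hclc).div_const _).continuousAt
        · exact near_one_slit (div_near_one hm (hmw c) (hu (cl x) c (hcldist x)))
      have hMeqc : M c = L c := by
        rw [hM]; simp only []
        rw [hcleq c le_rfl (by linarith), div_self (hne c), Complex.log_one, add_zero]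
      refine ⟨fun x => if x ≤ c then L x else M x,
        Continuous.if_le hL hMc continuous_id continuous_const (fun x hx => by rw [hx, hMeqc]),
        fun x hx => ?_⟩
      by_cases hxc : x ≤ c
      · simp only [if_pos hxc]
        exact hLe x hxc
      · simp only [if_neg hxc]
        push_neg at hxc
        have hx2 : x ≤ c + δ := by
          have : ((n : ℝ) + 1) * δ = c + δ := by rw [hc]; ring
          rw [← this]; push_cast at hx ⊢; linarith
        rw [hM]; simp only []
        rw [hcleq x (le_of_lt hxc) hx2, Complex.exp_add,
          Complex.exp_log (div_ne_zero (hne x) (hne c)), hLe c le_rfl]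
        rw [mul_div_assoc']
        exact mul_div_cancel_left₀ _ (hne c)
  obtain ⟨L, hL, hLe⟩ := main ⌈1 / δ⌉₊
  have h1δ : 1 ≤ (⌈1 / δ⌉₊ : ℝ) * δ := by
    rw [← div_le_iff₀ hδ]
    exact Nat.le_ceil _
  refine ⟨fun x => if x ≤ 1 then L x else L 1,
    Continuous.if_le hL continuous_const continuous_id continuous_const (fun x hx => by rw [hx]),
    fun x => ?_⟩
  by_cases hx1 : x ≤ 1
  · simp only [if_pos hx1]
    exact hLe x (le_trans hx1 h1δ)
  · simp only [if_neg hx1]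
    push_neg at hx1
    rw [hLe 1 h1δ]
    exact (hc1 x (le_of_lt hx1)).symm

lemma lift_plane (F : ℝ × ℝ → ℂ) (hF : Continuous F) (m δ : ℝ) (hm : 0 < m)
    (hmF : ∀ q, m ≤ ‖F q‖) (hδ : 0 < δ)
    (huS : ∀ x y t, |x - y| ≤ δ → ‖F (x, t) - F (y, t)‖ < m)
    (huT : ∀ s t t', |t - t'| ≤ δ → ‖F (s, t) - F (s, t')‖ < m)
    (hs0 : ∀ x t, x ≤ 0 → F (x, t) = F (0, t)) (hs1 : ∀ x t, 1 ≤ x → F (x, t) = F (1, t))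
    (ht0 : ∀ s t, t ≤ 0 → F (s, t) = F (s, 0)) :
    ∃ L : ℝ × ℝ → ℂ, Continuous L ∧ ∀ q, q.2 ≤ 1 → Complex.exp (L q) = F q := by
  have hne : ∀ q, F q ≠ 0 := by
    intro q h0
    have := hmF q; rw [h0] at this; simp at this; linarith
  have main : ∀ n : ℕ, ∃ L : ℝ × ℝ → ℂ, Continuous L ∧
      ∀ q : ℝ × ℝ, q.2 ≤ (n : ℝ) * δ → Complex.exp (L q) = F q := by
    intro n
    induction n with
    | zero =>
      obtain ⟨Lw, hLw, hLwe⟩ := lift_line (fun s => F (s, 0)) (hF.comp (continuous_id.prodMk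
        continuous_const)) m δ hm (fun x => hmF _) hδ (fun x y h => huS x y 0 h)
        (fun x hx => hs0 x 0 hx) (fun x hx => hs1 x 0 hx)
      refine ⟨fun q => Lw q.1, hLw.comp continuous_fst, fun q hq => ?_⟩
      rw [hLwe q.1]
      exact (ht0 q.1 q.2 (by simpa using hq)).symm
    | succ n ih =>
      obtain ⟨L, hL, hLe⟩ := ih
      set c : ℝ := (n : ℝ) * δ with hc
      set cl : ℝ → ℝ := fun x => max c (min (c + δ) x) with hcl
      have hclc : Continuous cl := continuous_const.max (continuous_const.min continuous_id)
      have hclmem : ∀ x, c ≤ cl x ∧ cl x ≤ c + δ := by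
        intro x
        exact ⟨le_max_left _ _, max_le (by linarith) (min_le_left _ _)⟩
      have hcldist : ∀ x, |cl x - c| ≤ δ := by
        intro x
        rw [abs_le]
        constructor <;> [linarith [(hclmem x).1]; linarith [(hclmem x).2]]
      have hcleq : ∀ x, c ≤ x → x ≤ c + δ → cl x = x := by
        intro x h1 h2
        rw [hcl]; simp only []
        rw [min_eq_right h2, max_eq_right h1]
      set M : ℝ × ℝ → ℂ := fun q => L (q.1, c) + Complex.log (F (q.1, cl q.2) / F (q.1, c)) with hM
      have hMc : Continuous M := by
        refine ((hL.comp (continuous_fst.prodMk continuous_const)).add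
          (continuous_iff_continuousAt.mpr fun q => ?_))
        refine ContinuousAt.clog ?_ ?_
        · exact ((hF.comp (continuous_fst.prodMk (hclc.comp continuous_snd))).div
            (hF.comp (continuous_fst.prodMk continuous_const)) (fun q => hne _)).continuousAt
        · exact near_one_slit (div_near_one hm (hmF _) (huT q.1 (cl q.2) c (hcldist q.2)))
      have hMeqc : ∀ q : ℝ × ℝ, q.2 = c → M q = L q := by
        intro q hq
        rw [hM]; simp only []
        rw [hq, hcleq c le_rfl (by linarith), div_self (hne _), Complex.log_one, add_zero]
        rw [show (q.1, c) = q by rw [← hq]]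
      refine ⟨fun q => if q.2 ≤ c then L q else M q,
        Continuous.if_le hL hMc continuous_snd continuous_const (fun q hq => (hMeqc q hq).symm),
        fun q hq => ?_⟩
      by_cases hqc : q.2 ≤ c
      · simp only [if_pos hqc]
        exact hLe q hqc
      · simp only [if_neg hqc]
        push_neg at hqc
        have hq2 : q.2 ≤ c + δ := by
          have : ((n : ℝ) + 1) * δ = c + δ := by rw [hc]; ring
          rw [← this]; push_cast at hq ⊢; linarith
        rw [hM]; simp only []
        rw [hcleq q.2 (le_of_lt hqc) hq2, Complex.exp_add,
          Complex.exp_log (div_ne_zero (hne _) (hne _)), hLe (q.1, c) le_rfl]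
        rw [mul_div_assoc']
        exact mul_div_cancel_left₀ _ (hne _)
  obtain ⟨L, hL, hLe⟩ := main ⌈1 / δ⌉₊
  have h1δ : 1 ≤ (⌈1 / δ⌉₊ : ℝ) * δ := by
    rw [← div_le_iff₀ hδ]
    exact Nat.le_ceil _
  exact ⟨L, hL, fun q hq => hLe q (le_trans hq h1δ)⟩

lemma cos_pos_of_re_pos {z : ℂ} {b : ℝ}
    (h : 0 < (Complex.exp z * (starRingEnd ℂ) (Complex.exp ((b : ℂ) * I))).re) :
    0 < Real.cos (z.im - b) := by
  rw [re_mul_conj_exp] at h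
  nlinarith [Real.exp_pos z.re]

lemma cos_pos_of_re_neg {z : ℂ} {b : ℝ}
    (h : (Complex.exp z * (starRingEnd ℂ) (Complex.exp ((b : ℂ) * I))).re < 0) :
    0 < Real.cos (z.im - b - π) := by
  rw [show z.im - b - π = -(π - (z.im - b)) by ring, Real.cos_neg, Real.cos_pi_sub]
  rw [re_mul_conj_exp] at h
  nlinarith [Real.exp_pos z.re]

lemma norm_exp_mul_I (b : ℝ) : ‖Complex.exp ((b : ℂ) * I)‖ = 1 := by
  rw [Complex.norm_exp_ofReal_mul_I]


lemma pin_aux0 {u : ℤ} (h1 : 2 * π * (u : ℝ) < 2 * π) (h2 : -(2 * π) < 2 * π * (u : ℝ)) :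
    u = 0 := by
  have hπ := Real.pi_pos
  have c1 : u < 1 := by
    by_contra h
    push_neg at h
    have : (1 : ℝ) ≤ (u : ℝ) := by exact_mod_cast h
    nlinarith
  have c2 : (-1 : ℤ) < u := by
    by_contra h
    push_neg at h
    have : (u : ℝ) ≤ (-1 : ℝ) := by exact_mod_cast h
    nlinarith
  omega

lemma pin_aux1 {u : ℤ} (h1 : 2 * π * (u : ℝ) < 0) (h2 : -(3 * π) < 2 * π * (u : ℝ)) :
    u = -1 := by
  have hπ := Real.pi_pos
  have c1 : u < 0 := by
    by_contra h
    push_neg at h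
    have : (0 : ℝ) ≤ (u : ℝ) := by exact_mod_cast h
    nlinarith
  have c2 : (-2 : ℤ) < u := by
    by_contra h
    push_neg at h
    have : (u : ℝ) ≤ (-2 : ℝ) := by exact_mod_cast h
    nlinarith
  omega

set_option maxHeartbeats 1000000 in
set_option maxHeartbeats 1000000 in
lemma crossing {f g : unitInterval → ℂ} (hf : Continuous f) (hg : Continuous g)
    (hfm : ∀ s, ‖f s‖ ≤ 1) (hgm : ∀ t, ‖g t‖ ≤ 1)
    (hd : ∀ s t, f s ≠ g t)
    {a1 b1 a2 b2 : ℝ} (o1 : a1 < b1) (o2 : b1 < a2) (o3 : a2 < b2) (o4 : b2 < a1 + 2 * π)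
    (hf0 : f 0 = Complex.exp ((a1 : ℂ) * I)) (hf1 : f 1 = Complex.exp ((a2 : ℂ) * I))
    (hg0 : g 0 = Complex.exp ((b1 : ℂ) * I)) (hg1 : g 1 = Complex.exp ((b2 : ℂ) * I)) :
    False := by
  have hπ := Real.pi_pos
  set pr : ℝ → unitInterval := Set.projIcc 0 1 zero_le_one with hpr
  have hprc : Continuous pr := continuous_projIcc
  set F : ℝ × ℝ → ℂ := fun q => f (pr q.1) - g (pr q.2) with hFdef
  have hFcont : Continuous F :=
    (hf.comp (hprc.comp continuous_fst)).sub (hg.comp (hprc.comp continuous_snd))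
  have hFne : ∀ q, F q ≠ 0 := fun q => sub_ne_zero.mpr (hd _ _)
  have hprcl : ∀ x : ℝ, pr (max 0 (min 1 x)) = pr x := by
    intro x
    apply Subtype.ext
    rw [hpr, Set.coe_projIcc, Set.coe_projIcc]
    have hy1 : (0 : ℝ) ⊔ 1 ⊓ x ≤ 1 := max_le zero_le_one (min_le_left _ _)
    have hy0 : (0 : ℝ) ≤ 0 ⊔ 1 ⊓ x := le_max_left _ _
    rw [min_eq_right hy1, max_eq_right hy0]
  have hKc : IsCompact ((Icc (0:ℝ) 1) ×ˢ (Icc (0:ℝ) 1)) := isCompact_Icc.prod isCompact_Icc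
  obtain ⟨q0, hq0K, hq0min⟩ := hKc.exists_isMinOn
    ⟨((0:ℝ), (0:ℝ)), ⟨⟨le_rfl, zero_le_one⟩, ⟨le_rfl, zero_le_one⟩⟩⟩
    (continuous_norm.comp hFcont).continuousOn
  have hq0 : ∀ y ∈ (Icc (0:ℝ) 1) ×ˢ (Icc (0:ℝ) 1), ‖F q0‖ ≤ ‖F y‖ := fun y hy => hq0min hy
  set m : ℝ := ‖F q0‖ with hmdef
  have hm : 0 < m := norm_pos_iff.mpr (hFne q0)
  have hmF : ∀ q, m ≤ ‖F q‖ := by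
    intro q
    have hmem : ((max 0 (min 1 q.1), max 0 (min 1 q.2)) : ℝ × ℝ) ∈
        (Icc (0:ℝ) 1) ×ˢ (Icc (0:ℝ) 1) :=
      ⟨⟨le_max_left _ _, max_le zero_le_one (min_le_left _ _)⟩,
       ⟨le_max_left _ _, max_le zero_le_one (min_le_left _ _)⟩⟩
    have h1 := hq0 _ hmem
    have heq : F (max 0 (min 1 q.1), max 0 (min 1 q.2)) = F q := by
      rw [hFdef]
      simp only []
      rw [hprcl q.1, hprcl q.2]
    rw [heq] at h1
    exact h1
  have hUC : UniformContinuous F := by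
    have hu1 : UniformContinuous fun q : ℝ × ℝ => pr q.1 :=
      ((LipschitzWith.projIcc zero_le_one).uniformContinuous).comp uniformContinuous_fst
    have hu2 : UniformContinuous fun q : ℝ × ℝ => pr q.2 :=
      ((LipschitzWith.projIcc zero_le_one).uniformContinuous).comp uniformContinuous_snd
    exact ((CompactSpace.uniformContinuous_of_continuous hf).comp hu1).sub
      ((CompactSpace.uniformContinuous_of_continuous hg).comp hu2)
  obtain ⟨δ0, hδ0, hδ⟩ := Metric.uniformContinuous_iff.mp hUC m hm
  have hδp : 0 < δ0 / 2 := by linarith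
  have hdd : ∀ q q' : ℝ × ℝ, dist q q' ≤ δ0 / 2 → ‖F q - F q'‖ < m := by
    intro q q' h
    rw [← dist_eq_norm]
    exact hδ (lt_of_le_of_lt h (by linarith))
  have huS : ∀ x y t : ℝ, |x - y| ≤ δ0 / 2 → ‖F (x, t) - F (y, t)‖ < m := by
    intro x y t h
    apply hdd
    rw [Prod.dist_eq]
    apply max_le
    · rw [Real.dist_eq]; exact h
    · simp; linarith
  have huT : ∀ s t t' : ℝ, |t - t'| ≤ δ0 / 2 → ‖F (s, t) - F (s, t')‖ < m := by
    intro s t t' h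
    apply hdd
    rw [Prod.dist_eq]
    apply max_le
    · simp; linarith
    · rw [Real.dist_eq]; exact h
  have hs0 : ∀ x t : ℝ, x ≤ 0 → F (x, t) = F (0, t) := by
    intro x t hx
    rw [hFdef]
    simp only []
    rw [hpr, Set.projIcc_of_le_left _ hx, Set.projIcc_left]
  have hs1 : ∀ x t : ℝ, 1 ≤ x → F (x, t) = F (1, t) := by
    intro x t hx
    rw [hFdef]
    simp only []
    rw [hpr, Set.projIcc_of_right_le _ hx, Set.projIcc_right]
  have ht0 : ∀ s t : ℝ, t ≤ 0 → F (s, t) = F (s, 0) := by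
    intro s t ht
    rw [hFdef]
    simp only []
    rw [hpr, Set.projIcc_of_le_left _ ht, Set.projIcc_left]
  obtain ⟨L, hL, hLF⟩ := lift_plane F hFcont m (δ0 / 2) hm hmF hδp huS huT hs0 hs1 ht0
  have hpr0 : pr 0 = 0 := by
    apply Subtype.ext
    rw [hpr, Set.coe_projIcc]
    norm_num
  have hpr1 : pr 1 = 1 := by
    apply Subtype.ext
    rw [hpr, Set.coe_projIcc]
    norm_num
  have hF00 : F (0, 0) = Complex.exp ((a1 : ℂ) * I) - Complex.exp ((b1 : ℂ) * I) := by
    rw [hFdef]; simp only []; rw [hpr0, hf0, hg0]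
  have hF10 : F (1, 0) = Complex.exp ((a2 : ℂ) * I) - Complex.exp ((b1 : ℂ) * I) := by
    rw [hFdef]; simp only []; rw [hpr0, hpr1, hf1, hg0]
  have hF11 : F (1, 1) = Complex.exp ((a2 : ℂ) * I) - Complex.exp ((b2 : ℂ) * I) := by
    rw [hFdef]; simp only []; rw [hpr1, hf1, hg1]
  have hF01 : F (0, 1) = Complex.exp ((a1 : ℂ) * I) - Complex.exp ((b2 : ℂ) * I) := by
    rw [hFdef]; simp only []; rw [hpr0, hpr1, hf0, hg1]
  have hL00 : Complex.exp (L (0, 0)) = F (0, 0) := hLF (0, 0) (by norm_num)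
  have hL10 : Complex.exp (L (1, 0)) = F (1, 0) := hLF (1, 0) (by norm_num)
  have hL11 : Complex.exp (L (1, 1)) = F (1, 1) := hLF (1, 1) le_rfl
  have hL01 : Complex.exp (L (0, 1)) = F (0, 1) := hLF (0, 1) le_rfl
  -- corner congruences
  obtain ⟨e1, p1⟩ := exp_sub_exp o1 (by linarith)
  obtain ⟨kA, hkA⟩ := im_of_exp_eq p1 (by rw [hL00, hF00, e1])
  obtain ⟨e2, p2⟩ := exp_sub_exp o2 (by linarith)
  have hF10' : F (1, 0) = ((2 * Real.sin ((a2 - b1) / 2) : ℝ) : ℂ) *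
      Complex.exp ((((b1 + a2) / 2 - π / 2 + π : ℝ) : ℂ) * I) := by
    rw [hF10, show Complex.exp ((a2 : ℂ) * I) - Complex.exp ((b1 : ℂ) * I)
      = -(Complex.exp ((b1 : ℂ) * I) - Complex.exp ((a2 : ℂ) * I)) by ring, e2,
      neg_mul_eq_mul_neg, neg_exp_mul_I]
  obtain ⟨kB, hkB⟩ := im_of_exp_eq p2 (by rw [hL10, hF10'])
  obtain ⟨e3, p3⟩ := exp_sub_exp o3 (by linarith)
  obtain ⟨kC, hkC⟩ := im_of_exp_eq p3 (by rw [hL11, hF11, e3])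
  obtain ⟨e4, p4⟩ := exp_sub_exp (show a1 < b2 by linarith) o4
  obtain ⟨kD, hkD⟩ := im_of_exp_eq p4 (by rw [hL01, hF01, e4])
  -- bottom edge
  have eBA : |(L (1, 0)).im - (L (0, 0)).im| < π := by
    have h' := edge_abs_lt (fun s => (L (s, 0)).im - b1 - π)
      (((Complex.continuous_im.comp (hL.comp (continuous_id.prodMk
        continuous_const))).sub continuous_const).sub continuous_const) ?_
    · try simp only [] at h'
      rwa [show (L (1, 0)).im - b1 - π - ((L (0, 0)).im - b1 - π)
        = (L (1, 0)).im - (L (0, 0)).im by ring] at h'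
    · intro s hs
      have hz : Complex.exp (L (s, 0)) = F (s, 0) := hLF (s, 0) (by norm_num)
      have hw : (F (s, 0) * (starRingEnd ℂ) (Complex.exp ((b1 : ℂ) * I))).re < 0 := by
        apply re_neg_of_in_disc
        · have he : F (s, 0) + Complex.exp ((b1 : ℂ) * I) = f (pr s) := by
            rw [hFdef]; simp only []; rw [hpr0, hg0]; ring
          rw [he]; exact hfm _
        · exact norm_exp_mul_I b1
        · exact hFne _
      rw [← hz] at hw
      exact cos_pos_of_re_neg hw
  -- top edge
  have eCD : |(L (1, 1)).im - (L (0, 1)).im| < π := by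
    have h' := edge_abs_lt (fun s => (L (s, 1)).im - b2 - π)
      (((Complex.continuous_im.comp (hL.comp (continuous_id.prodMk
        continuous_const))).sub continuous_const).sub continuous_const) ?_
    · try simp only [] at h'
      rwa [show (L (1, 1)).im - b2 - π - ((L (0, 1)).im - b2 - π)
        = (L (1, 1)).im - (L (0, 1)).im by ring] at h'
    · intro s hs
      have hz : Complex.exp (L (s, 1)) = F (s, 1) := hLF (s, 1) le_rfl
      have hw : (F (s, 1) * (starRingEnd ℂ) (Complex.exp ((b2 : ℂ) * I))).re < 0 := by
        apply re_neg_of_in_disc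
        · have he : F (s, 1) + Complex.exp ((b2 : ℂ) * I) = f (pr s) := by
            rw [hFdef]; simp only []; rw [hpr1, hg1]; ring
          rw [he]; exact hfm _
        · exact norm_exp_mul_I b2
        · exact hFne _
      rw [← hz] at hw
      exact cos_pos_of_re_neg hw
  -- left edge
  have eDA : |(L (0, 1)).im - (L (0, 0)).im| < π := by
    have h' := edge_abs_lt (fun t => (L (0, t)).im - a1)
      ((Complex.continuous_im.comp (hL.comp (continuous_const.prodMk
        continuous_id))).sub continuous_const) ?_
    · try simp only [] at h'
      rwa [show (L (0, 1)).im - a1 - ((L (0, 0)).im - a1)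
        = (L (0, 1)).im - (L (0, 0)).im by ring] at h'
    · intro t ht
      have hz : Complex.exp (L (0, t)) = F (0, t) := hLF (0, t) ht.2
      have hw : 0 < (F (0, t) * (starRingEnd ℂ) (Complex.exp ((a1 : ℂ) * I))).re := by
        have hneg : ((-F (0, t)) * (starRingEnd ℂ) (Complex.exp ((a1 : ℂ) * I))).re < 0 := by
          apply re_neg_of_in_disc
          · have he : -F (0, t) + Complex.exp ((a1 : ℂ) * I) = g (pr t) := by
              rw [hFdef]; simp only []; rw [hpr0, hf0]; ring
            rw [he]; exact hgm _
          · exact norm_exp_mul_I a1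
          · exact neg_ne_zero.mpr (hFne _)
        rw [neg_mul, neg_re] at hneg
        linarith
      rw [← hz] at hw
      exact cos_pos_of_re_pos hw
  -- right edge
  have eCB : |(L (1, 1)).im - (L (1, 0)).im| < π := by
    have h' := edge_abs_lt (fun t => (L (1, t)).im - a2)
      ((Complex.continuous_im.comp (hL.comp (continuous_const.prodMk
        continuous_id))).sub continuous_const) ?_
    · try simp only [] at h'
      rwa [show (L (1, 1)).im - a2 - ((L (1, 0)).im - a2)
        = (L (1, 1)).im - (L (1, 0)).im by ring] at h'
    · intro t ht
      have hz : Complex.exp (L (1, t)) = F (1, t) := hLF (1, t) ht.2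
      have hw : 0 < (F (1, t) * (starRingEnd ℂ) (Complex.exp ((a2 : ℂ) * I))).re := by
        have hneg : ((-F (1, t)) * (starRingEnd ℂ) (Complex.exp ((a2 : ℂ) * I))).re < 0 := by
          apply re_neg_of_in_disc
          · have he : -F (1, t) + Complex.exp ((a2 : ℂ) * I) = g (pr t) := by
              rw [hFdef]; simp only []; rw [hpr1, hf1]; ring
            rw [he]; exact hgm _
          · exact norm_exp_mul_I a2
          · exact neg_ne_zero.mpr (hFne _)
        rw [neg_mul, neg_re] at hneg
        linarith
      rw [← hz] at hw
      exact cos_pos_of_re_pos hw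
  -- pin integers
  obtain ⟨hBA1, hBA2⟩ := abs_lt.mp eBA
  obtain ⟨hCB1, hCB2⟩ := abs_lt.mp eCB
  obtain ⟨hCD1, hCD2⟩ := abs_lt.mp eCD
  obtain ⟨hDA1, hDA2⟩ := abs_lt.mp eDA
  have hn1 : kB - kA = -1 := by
    apply pin_aux1
    · push_cast
      linarith [hkA, hkB, hBA2, o1, o2]
    · push_cast
      linarith [hkA, hkB, hBA1, o1, o2, o3, o4]
  have hn2 : kC - kB = 0 := by
    apply pin_aux0
    · push_cast
      linarith [hkB, hkC, hCB2, o2, o3]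
    · push_cast
      linarith [hkB, hkC, hCB1, o2, o3, o1, o4]
  have hn3 : kC - kD = 0 := by
    apply pin_aux0
    · push_cast
      linarith [hkC, hkD, hCD2, o1, o2, o3, o4]
    · push_cast
      linarith [hkC, hkD, hCD1, o1, o2, o3, o4]
  have hn4 : kD - kA = 0 := by
    apply pin_aux0
    · push_cast
      linarith [hkA, hkD, hDA2, o1, o2, o3, o4]
    · push_cast
      linarith [hkA, hkD, hDA1, o1, o2, o3, o4]
  omega


lemma bdryPt_eq (p : ℕ) (hp : 1 ≤ p) (k : Fin (2 * p)) :
    bdryPt p k = Complex.exp (((π * (k : ℕ) / p : ℝ) : ℂ) * I) := by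
  unfold bdryPt
  congr 1
  have hp0 : (p : ℂ) ≠ 0 := Nat.cast_ne_zero.mpr (by omega)
  push_cast
  field_simp

lemma bdryPt_inj (p : ℕ) (hp : 1 ≤ p) : Function.Injective (bdryPt p) := by
  intro j k h
  have hπ := Real.pi_pos
  have hp0 : (0 : ℝ) < p := by exact_mod_cast Nat.lt_of_lt_of_le Nat.zero_lt_one hp
  rw [bdryPt_eq p hp, bdryPt_eq p hp] at h
  obtain ⟨n, hn⟩ := Complex.exp_eq_exp_iff_exists_int.mp h
  have him := congrArg Complex.im hn
  simp at him
  have hjb : ((j : ℕ) : ℝ) < 2 * p := by exact_mod_cast j.isLt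
  have hkb : ((k : ℕ) : ℝ) < 2 * p := by exact_mod_cast k.isLt
  have hj0 : (0 : ℝ) ≤ ((j : ℕ) : ℝ) := Nat.cast_nonneg _
  have hk0 : (0 : ℝ) ≤ ((k : ℕ) : ℝ) := Nat.cast_nonneg _
  have hjlt : π * (j : ℕ) / p < 2 * π := by
    rw [div_lt_iff₀ hp0]; nlinarith
  have hklt : π * (k : ℕ) / p < 2 * π := by
    rw [div_lt_iff₀ hp0]; nlinarith
  have hjge : 0 ≤ π * (j : ℕ) / p := by positivity
  have hkge : 0 ≤ π * (k : ℕ) / p := by positivity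
  have hn0 : n = 0 := by
    apply pin_aux0 <;> linarith [him]
  rw [hn0] at him
  simp at him
  have heq : π * ((j : ℕ) : ℝ) / p = π * ((k : ℕ) : ℝ) / p := by linarith
  have : ((j : ℕ) : ℝ) = ((k : ℕ) : ℝ) := by
    field_simp at heq
    exact heq
  have hjk : (j : ℕ) = (k : ℕ) := by exact_mod_cast this
  exact Fin.ext hjk

end DiscArcsAux

open DiscArcsAux in
/-- If `p` pairwise disjoint injective arcs in the closed unit disc meet the boundary
circle exactly in their endpoints, the endpoints being exactly the `2p` equally spaced
boundary points `z_k` (each such point being an endpoint of exactly one arc), then every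
arc joins a point `z_a` to a point `z_b` with `a` and `b` of opposite parity. -/
theorem disc_arcs_join_opposite_parity (p : ℕ) (hp : 1 ≤ p)
    (γ : Fin p → unitInterval → ℂ)
    (hcont : ∀ m, Continuous (γ m))
    (hinj : ∀ m, Function.Injective (γ m))
    (hmem : ∀ m t, γ m t ∈ Metric.closedBall (0 : ℂ) 1)
    (hbdry : ∀ m t, ‖γ m t‖ = 1 ↔ (t = 0 ∨ t = 1))
    (hdisj : ∀ m n, m ≠ n → Disjoint (Set.range (γ m)) (Set.range (γ n)))
    (hend0 : ∀ m, ∃ k : Fin (2 * p), γ m 0 = bdryPt p k)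
    (hend1 : ∀ m, ∃ k : Fin (2 * p), γ m 1 = bdryPt p k)
    (huniq : ∀ k : Fin (2 * p), ∃! m : Fin p, bdryPt p k = γ m 0 ∨ bdryPt p k = γ m 1) :
    ∀ m : Fin p, ∃ a b : Fin (2 * p), γ m 0 = bdryPt p a ∧ γ m 1 = bdryPt p b ∧
      ((Even (a : ℕ) ∧ Odd (b : ℕ)) ∨ (Odd (a : ℕ) ∧ Even (b : ℕ))) := by
  classical
  have hπ := Real.pi_pos
  have hp0 : (0 : ℝ) < p := by exact_mod_cast Nat.lt_of_lt_of_le Nat.zero_lt_one hp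
  have h01 : (0 : unitInterval) ≠ 1 := by
    intro h
    have := congrArg Subtype.val h
    norm_num at this
  have hzinj := bdryPt_inj p hp
  set θf : Fin (2 * p) → ℝ := fun k => π * (k : ℕ) / p with hθf
  have hθmono : ∀ {j k : Fin (2 * p)}, (j : ℕ) < (k : ℕ) → θf j < θf k := by
    intro j k h
    rw [hθf]
    have hc : ((j : ℕ) : ℝ) < ((k : ℕ) : ℝ) := by exact_mod_cast h
    apply div_lt_div_of_pos_right _ hp0
    nlinarith
  have hθ0 : ∀ k : Fin (2 * p), 0 ≤ θf k := fun k => by rw [hθf]; positivity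
  have hθlt : ∀ k : Fin (2 * p), θf k < 2 * π := by
    intro k
    rw [hθf, div_lt_iff₀ hp0]
    have : ((k : ℕ) : ℝ) < 2 * p := by exact_mod_cast k.isLt
    nlinarith
  have hz : ∀ k, bdryPt p k = Complex.exp ((θf k : ℂ) * I) := fun k => bdryPt_eq p hp k
  set E : Fin (2 * p) → Fin p := fun k => (huniq k).choose with hE
  have hEmem : ∀ k, bdryPt p k = γ (E k) 0 ∨ bdryPt p k = γ (E k) 1 :=
    fun k => (huniq k).choose_spec.1
  have hEuniq : ∀ k n, (bdryPt p k = γ n 0 ∨ bdryPt p k = γ n 1) → n = E k :=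
    fun k n h => (huniq k).choose_spec.2 n h
  have hmem' : ∀ (j : Fin p) (t : unitInterval), ‖γ j t‖ ≤ 1 :=
    fun j t => mem_closedBall_zero_iff.mp (hmem j t)
  have key : ∀ (m : Fin p) (a b : Fin (2 * p)), (a : ℕ) < (b : ℕ) →
      (γ m 0 = bdryPt p a ∧ γ m 1 = bdryPt p b ∨ γ m 0 = bdryPt p b ∧ γ m 1 = bdryPt p a) →
      (a : ℕ) % 2 = (b : ℕ) % 2 → False := by
    intro m a b hab h0 hpar
    set S : Finset (Fin (2 * p)) :=
      Finset.univ.filter (fun k => (a : ℕ) < (k : ℕ) ∧ (k : ℕ) < (b : ℕ)) with hS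
    have hScard : S.card = (b : ℕ) - (a : ℕ) - 1 := by
      rw [hS]
      rw [show (b : ℕ) - (a : ℕ) - 1 = (Finset.Ico ((a : ℕ) + 1) (b : ℕ)).card by
        rw [Nat.card_Ico]; omega]
      refine Finset.card_bij (fun k _ => (k : ℕ)) ?_ ?_ ?_
      · intro k hk
        simp only [Finset.mem_filter] at hk
        show (k : ℕ) ∈ Finset.Ico ((a : ℕ) + 1) (b : ℕ)
        rw [Finset.mem_Ico]
        omega
      · intro k1 h1 k2 h2 h
        try simp only [] at h
        exact Fin.ext h
      · intro n hn
        rw [Finset.mem_Ico] at hn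
        refine ⟨⟨n, by have := b.isLt; omega⟩, ?_, rfl⟩
        simp only [Finset.mem_filter]
        exact ⟨Finset.mem_univ _, by omega⟩
    have hodd : S.card % 2 = 1 := by rw [hScard]; omega
    have hfib := Finset.card_eq_sum_card_fiberwise (f := E) (s := S) (t := Finset.univ)
      (fun x _ => Finset.mem_univ _)
    have hex : ∃ n : Fin p, (S.filter (fun k => E k = n)).card % 2 = 1 := by
      by_contra hall
      push_neg at hall
      have hev : ∀ n : Fin p, Even ((S.filter (fun k => E k = n)).card) := by
        intro n
        rw [Nat.even_iff]
        have := hall n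
        omega
      have heven : Even (S.card) := by
        rw [hfib]
        exact Finset.even_sum _ (fun n _ => hev n)
      rw [Nat.even_iff] at heven
      omega
    obtain ⟨n, hncard⟩ := hex
    set T := S.filter (fun k => E k = n) with hT
    have hTle : T.card ≤ 2 := by
      have hinto : T.card ≤ ({γ n 0, γ n 1} : Finset ℂ).card := by
        apply Finset.card_le_card_of_injOn (fun k => bdryPt p k)
        · intro k hk
          rw [hT, Finset.mem_coe, Finset.mem_filter] at hk
          have hEk := hEmem k
          rw [hk.2] at hEk
          rcases hEk with h | h
          · simp [h]
          · simp [h]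
        · intro k1 _ k2 _ h
          exact hzinj h
      exact hinto.trans ((Finset.card_insert_le _ _).trans (by simp))
    have hT1 : T.card = 1 := by omega
    obtain ⟨c, hc⟩ := Finset.card_eq_one.mp hT1
    have hcT : c ∈ T := by rw [hc]; exact Finset.mem_singleton_self c
    have hcS : (a : ℕ) < (c : ℕ) ∧ (c : ℕ) < (b : ℕ) := by
      have h' := hcT
      rw [hT, Finset.mem_filter, hS, Finset.mem_filter] at h'
      exact h'.1.2
    have hcE : E c = n := by
      have h' := hcT
      rw [hT, Finset.mem_filter] at h'
      exact h'.2
    have hEa : E a = m := (hEuniq a m (by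
      rcases h0 with ⟨h1, h2⟩ | ⟨h1, h2⟩
      exacts [Or.inl h1.symm, Or.inr h2.symm])).symm
    have hEb : E b = m := (hEuniq b m (by
      rcases h0 with ⟨h1, h2⟩ | ⟨h1, h2⟩
      exacts [Or.inr h2.symm, Or.inl h1.symm])).symm
    have hnm : n ≠ m := by
      intro hh
      have hEk := hEmem c
      rw [hcE, hh] at hEk
      rcases hEk with hcz | hcz <;> rcases h0 with ⟨h1, h2⟩ | ⟨h1, h2⟩
      · have := hzinj (hcz.trans h1)
        rw [this] at hcS
        omega
      · have := hzinj (hcz.trans h1)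
        rw [this] at hcS
        omega
      · have := hzinj (hcz.trans h2)
        rw [this] at hcS
        omega
      · have := hzinj (hcz.trans h2)
        rw [this] at hcS
        omega
    have hcz := hEmem c
    rw [hcE] at hcz
    have hd' : ∃ d : Fin (2 * p), (d : ℕ) ≠ (c : ℕ) ∧ E d = n ∧
        (γ n 0 = bdryPt p c ∧ γ n 1 = bdryPt p d ∨
         γ n 0 = bdryPt p d ∧ γ n 1 = bdryPt p c) := by
      rcases hcz with hcz | hcz
      · obtain ⟨d, hd⟩ := hend1 n
        refine ⟨d, ?_, (hEuniq d n (Or.inr hd.symm)).symm, Or.inl ⟨hcz.symm, hd⟩⟩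
        intro hdc
        have hdceq : bdryPt p d = bdryPt p c := by rw [Fin.ext hdc]
        rw [hdceq] at hd
        exact h01 (hinj n (hcz.symm.trans hd.symm))
      · obtain ⟨d, hd⟩ := hend0 n
        refine ⟨d, ?_, (hEuniq d n (Or.inl hd.symm)).symm, Or.inr ⟨hd, hcz.symm⟩⟩
        intro hdc
        have hdceq : bdryPt p d = bdryPt p c := by rw [Fin.ext hdc]
        rw [hdceq] at hd
        exact h01 (hinj n (hd.trans hcz))
    obtain ⟨d, hdc, hdE, hnend⟩ := hd'
    have hdS : ¬ ((a : ℕ) < (d : ℕ) ∧ (d : ℕ) < (b : ℕ)) := by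
      intro hdin
      have hdT : d ∈ T := by
        rw [hT, Finset.mem_filter, hS, Finset.mem_filter]
        exact ⟨⟨Finset.mem_univ _, hdin⟩, hdE⟩
      rw [hc, Finset.mem_singleton] at hdT
      exact hdc (by rw [hdT])
    have hda : (d : ℕ) ≠ (a : ℕ) := by
      intro hh
      have : d = a := Fin.ext hh
      rw [this, hEa] at hdE
      exact hnm hdE.symm
    have hdb : (d : ℕ) ≠ (b : ℕ) := by
      intro hh
      have : d = b := Fin.ext hh
      rw [this, hEb] at hdE
      exact hnm hdE.symm
    rcases Nat.lt_or_ge (d : ℕ) (a : ℕ) with hcase | hcase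
    · -- d < a < c < b
      obtain ⟨fn, hfnc, hfn0, hfn1, hfnr⟩ := orient (γ n) (hcont n) (bdryPt p d) (bdryPt p c)
        (by rcases hnend with ⟨h1, h2⟩ | ⟨h1, h2⟩
            exacts [Or.inr ⟨h1, h2⟩, Or.inl ⟨h1, h2⟩])
      obtain ⟨gm, hgmc, hgm0, hgm1, hgmr⟩ := orient (γ m) (hcont m) (bdryPt p a) (bdryPt p b)
        (by rcases h0 with ⟨h1, h2⟩ | ⟨h1, h2⟩
            exacts [Or.inl ⟨h1, h2⟩, Or.inr ⟨h1, h2⟩])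
      exact crossing hfnc hgmc
        (fun s => by obtain ⟨s', hs'⟩ := hfnr s; rw [hs']; exact hmem' n s')
        (fun t => by obtain ⟨t', ht'⟩ := hgmr t; rw [ht']; exact hmem' m t')
        (fun s t => by
          obtain ⟨s', hs'⟩ := hfnr s
          obtain ⟨t', ht'⟩ := hgmr t
          rw [hs', ht']
          intro hEq
          exact Set.disjoint_left.mp (hdisj n m hnm) ⟨s', rfl⟩ ⟨t', hEq.symm⟩)
        (hθmono hcase) (hθmono hcS.1) (hθmono hcS.2)
        (by linarith [hθlt b, hθ0 d])
        (by rw [hfn0]; exact hz d) (by rw [hfn1]; exact hz c)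
        (by rw [hgm0]; exact hz a) (by rw [hgm1]; exact hz b)
    · -- a < c < b < d
      have hbd : (b : ℕ) < (d : ℕ) := by omega
      obtain ⟨gm, hgmc, hgm0, hgm1, hgmr⟩ := orient (γ m) (hcont m) (bdryPt p a) (bdryPt p b)
        (by rcases h0 with ⟨h1, h2⟩ | ⟨h1, h2⟩
            exacts [Or.inl ⟨h1, h2⟩, Or.inr ⟨h1, h2⟩])
      obtain ⟨fn, hfnc, hfn0, hfn1, hfnr⟩ := orient (γ n) (hcont n) (bdryPt p c) (bdryPt p d)
        (by rcases hnend with ⟨h1, h2⟩ | ⟨h1, h2⟩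
            exacts [Or.inl ⟨h1, h2⟩, Or.inr ⟨h1, h2⟩])
      exact crossing hgmc hfnc
        (fun s => by obtain ⟨s', hs'⟩ := hgmr s; rw [hs']; exact hmem' m s')
        (fun t => by obtain ⟨t', ht'⟩ := hfnr t; rw [ht']; exact hmem' n t')
        (fun s t => by
          obtain ⟨s', hs'⟩ := hgmr s
          obtain ⟨t', ht'⟩ := hfnr t
          rw [hs', ht']
          intro hEq
          exact Set.disjoint_left.mp (hdisj m n (Ne.symm hnm)) ⟨s', rfl⟩ ⟨t', hEq.symm⟩)
        (hθmono hcS.1) (hθmono hcS.2) (hθmono hbd)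
        (by linarith [hθlt d, hθ0 a])
        (by rw [hgm0]; exact hz a) (by rw [hgm1]; exact hz b)
        (by rw [hfn0]; exact hz c) (by rw [hfn1]; exact hz d)
  intro m
  obtain ⟨a, ha⟩ := hend0 m
  obtain ⟨b, hb⟩ := hend1 m
  refine ⟨a, b, ha, hb, ?_⟩
  by_contra hpar
  have hne : (a : ℕ) ≠ (b : ℕ) := by
    intro h
    have hab : a = b := Fin.ext h
    rw [← hab] at hb
    exact h01 (hinj m (ha.trans hb.symm))
  have hpar2 : (a : ℕ) % 2 = (b : ℕ) % 2 := by
    rcases Nat.even_or_odd (a : ℕ) with hea | hoa <;>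
      rcases Nat.even_or_odd (b : ℕ) with heb | hob
    · rw [Nat.even_iff.mp hea, Nat.even_iff.mp heb]
    · exact absurd (Or.inl ⟨hea, hob⟩) hpar
    · exact absurd (Or.inr ⟨hoa, heb⟩) hpar
    · rw [Nat.odd_iff.mp hoa, Nat.odd_iff.mp hob]
  rcases Nat.lt_or_ge (a : ℕ) (b : ℕ) with hlt | hge
  · exact key m a b hlt (Or.inl ⟨ha, hb⟩) hpar2
  · exact key m b a (by omega) (Or.inr ⟨ha, hb⟩) hpar2.symm
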